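/- Let F be an n×n real matrix with all entries nonnegative, and let V be an n×n Metzler real matrix all of whose complex eigenvalues have strictly negative real part (so V is invertible). Then the spectral radius of −F·V⁻¹ is strictly less than 1 if and only if every complex eigenvalue of F + V has strictly negative real part. -/

import Mathlib

open Matrix Polynomial

set_option linter.unusedSectionVars false
set_option maxHeartbeats 1000000

/-- A square real matrix is Metzler if all its off-diagonal entries are nonnegative. -/
def Matrix.IsMetzler {n : Type*} (M : Matrix n n ℝ) : Prop :=
  ∀ i j, i ≠ j → 0 ≤ M i j

/-- The spectral radius of a real matrix: the maximum modulus of the eigenvalues of its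
complexification. -/
noncomputable def specRad {n : Type*} [Fintype n] [DecidableEq n] (A : Matrix n n ℝ) : ℝ :=
  sSup ((fun z : ℂ => ‖z‖) '' spectrum ℂ (A.map (algebraMap ℝ ℂ)))

namespace NGM

variable {n : Type*} [Fintype n] [DecidableEq n]

lemma memspec_iff_det (A : Matrix n n ℂ) (z : ℂ) :
    z ∈ spectrum ℂ A ↔ (z • (1 : Matrix n n ℂ) - A).det = 0 := by
  rw [spectrum.mem_iff, Algebra.algebraMap_eq_smul_one, Matrix.isUnit_iff_isUnit_det,
    isUnit_iff_ne_zero, not_ne_iff]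

lemma eval_charpoly' (A : Matrix n n ℂ) (z : ℂ) :
    A.charpoly.eval z = (z • (1 : Matrix n n ℂ) - A).det := by
  have h : (charmatrix A).map (Polynomial.evalRingHom z) = z • (1 : Matrix n n ℂ) - A := by
    ext i j
    by_cases hij : i = j
    · subst hij; simp [charmatrix_apply_eq, Matrix.one_apply]
    · simp [charmatrix_apply_ne _ _ _ hij, Matrix.one_apply_ne hij, Matrix.smul_apply]
  rw [Matrix.charpoly, ← h]
  simpa [RingHom.mapMatrix_apply] using (RingHom.map_det (Polynomial.evalRingHom z) A.charmatrix)

lemma spec_finite (A : Matrix n n ℂ) : (spectrum ℂ A).Finite := by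
  have h : spectrum ℂ A ⊆ {z | A.charpoly.IsRoot z} := by
    intro z hz
    rw [memspec_iff_det] at hz
    simpa [IsRoot, eval_charpoly'] using hz
  exact Set.Finite.subset (Polynomial.finite_setOf_isRoot A.charpoly_monic.ne_zero) h

lemma map_smul_one' (c : ℝ) :
    ((c • (1 : Matrix n n ℝ)).map (algebraMap ℝ ℂ)) = (c : ℂ) • (1 : Matrix n n ℂ) := by
  ext i j
  by_cases hij : i = j
  · subst hij; simp
  · simp [Matrix.one_apply_ne hij]

lemma core_vanish {R A : Matrix n n ℝ} (hR : ∀ i j, 0 ≤ R i j) (hRA : R * A = 1)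
    {w : n → ℝ} (hw : ∀ i, 0 ≤ w i) (hAw : ∀ i, A.mulVec w i ≤ 0) : w = 0 := by
  have h1 : w = R.mulVec (A.mulVec w) := by
    rw [Matrix.mulVec_mulVec, hRA, Matrix.one_mulVec]
  funext i
  have h2 : R.mulVec (A.mulVec w) i ≤ 0 := by
    apply Finset.sum_nonpos
    intro j _
    exact mul_nonpos_of_nonneg_of_nonpos (hR i j) (hAw j)
  rw [← h1] at h2
  exact le_antisymm h2 (hw i)

lemma exists_abs_eigvec (S : Matrix n n ℝ) (hS : ∀ i j, 0 ≤ S i j) {z : ℂ}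
    (hz : (z • (1 : Matrix n n ℂ) - S.map (algebraMap ℝ ℂ)).det = 0) :
    ∃ w : n → ℝ, (∀ i, 0 ≤ w i) ∧ w ≠ 0 ∧ ∀ i, ‖z‖ * w i ≤ S.mulVec w i := by
  obtain ⟨v, hv0, hv⟩ := (Matrix.exists_mulVec_eq_zero_iff).2 hz
  refine ⟨fun i => ‖v i‖, fun i => norm_nonneg _, ?_, ?_⟩
  · intro h
    apply hv0
    funext i
    have := congrFun h i
    simpa using this
  · intro i
    have hev : (S.map (algebraMap ℝ ℂ)).mulVec v = z • v := by
      have : (z • (1 : Matrix n n ℂ)).mulVec v - (S.map (algebraMap ℝ ℂ)).mulVec v = 0 := by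
        rw [← Matrix.sub_mulVec, hv]
      have h2 : (z • (1 : Matrix n n ℂ)).mulVec v = z • v := by
        rw [Matrix.smul_mulVec, Matrix.one_mulVec]
      rw [h2] at this
      exact (sub_eq_zero.mp this).symm
    have : ‖z * v i‖ ≤ S.mulVec (fun j => ‖v j‖) i := by
      have hzi : z * v i = ∑ j, (S i j : ℂ) * v j := by
        have := congrFun hev i
        simp [Matrix.mulVec, dotProduct, Matrix.map_apply] at this
        simpa [mul_comm] using this.symm
      rw [hzi]
      refine le_trans (norm_sum_le _ _) ?_
      apply le_of_eq
      apply Finset.sum_congr rfl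
      intro j _
      rw [norm_mul, Complex.norm_real, Real.norm_eq_abs, abs_of_nonneg (hS i j)]
    simpa [_root_.map_mul, Matrix.mulVec, dotProduct] using this

lemma metzler_stable_of_inv_nonpos {M : Matrix n n ℝ} (hM : ∀ i j, i ≠ j → 0 ≤ M i j)
    (hdet : IsUnit M.det) (hinv : ∀ i j, M⁻¹ i j ≤ 0) :
    ∀ z ∈ spectrum ℂ (M.map (algebraMap ℝ ℂ)), z.re < 0 := by
  intro z hz
  by_contra hre
  push_neg at hre
  set c : ℝ := 1 + ∑ i, |M i i| with hc
  have hc0 : 0 < c := by positivity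
  have hcM : ∀ i, 0 ≤ M i i + c := by
    intro i
    have h1 : |M i i| ≤ ∑ k, |M k k| :=
      Finset.single_le_sum (f := fun k => |M k k|) (fun k _ => abs_nonneg _) (Finset.mem_univ i)
    have := neg_abs_le (M i i)
    simp only [hc]
    linarith
  set B : Matrix n n ℝ := M + c • 1 with hB
  have hBnn : ∀ i j, 0 ≤ B i j := by
    intro i j
    by_cases hij : i = j
    · subst hij; simpa [hB, Matrix.one_apply] using hcM i
    · simpa [hB, Matrix.one_apply_ne hij] using hM i j hij
  have hdet0 : ((z + c) • (1 : Matrix n n ℂ) - B.map (algebraMap ℝ ℂ)).det = 0 := by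
    have : ((z + c) • (1 : Matrix n n ℂ) - B.map (algebraMap ℝ ℂ))
        = z • (1 : Matrix n n ℂ) - M.map (algebraMap ℝ ℂ) := by
      rw [hB, Matrix.map_add _ (map_add _), map_smul_one', add_smul]
      abel
    rw [this, ← memspec_iff_det]
    exact hz
  obtain ⟨w, hw, hw0, hineq⟩ := exists_abs_eigvec B hBnn hdet0
  have hMw : ∀ i, 0 ≤ M.mulVec w i := by
    intro i
    have h1 : ‖z + c‖ * w i ≤ B.mulVec w i := hineq i
    have h2 : c ≤ ‖z + c‖ := by
      have := Complex.re_le_norm (z + c)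
      simp only [Complex.add_re, Complex.ofReal_re] at this
      linarith
    have h3 : B.mulVec w i = M.mulVec w i + c * w i := by
      rw [hB, Matrix.add_mulVec, Matrix.smul_mulVec, Matrix.one_mulVec]
      simp
    nlinarith [hw i, mul_le_mul_of_nonneg_right h2 (hw i)]
  have : w = 0 := by
    refine core_vanish (R := -M⁻¹) (A := -M) (fun i j => by simpa using hinv i j) ?_ hw ?_
    · rw [neg_mul_neg]
      exact Matrix.nonsing_inv_mul M hdet
    · intro i
      simpa [Matrix.neg_mulVec] using hMw i
  exact hw0 this

lemma abs_lt_one_of_inv_nonneg {T : Matrix n n ℝ} (hT : ∀ i j, 0 ≤ T i j)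
    (hdet : IsUnit (1 - T).det) (hinv : ∀ i j, 0 ≤ (1 - T)⁻¹ i j) :
    ∀ z ∈ spectrum ℂ (T.map (algebraMap ℝ ℂ)), ‖z‖ < 1 := by
  intro z hz
  by_contra habs
  push_neg at habs
  rw [memspec_iff_det] at hz
  obtain ⟨w, hw, hw0, hineq⟩ := exists_abs_eigvec T hT hz
  have : w = 0 := by
    refine core_vanish (R := (1 - T)⁻¹) (A := 1 - T) hinv (Matrix.nonsing_inv_mul _ hdet) hw ?_
    intro i
    have h1 := hineq i
    have h2 : w i ≤ ‖z‖ * w i := le_mul_of_one_le_left (hw i) habs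
    have h3 : (1 - T).mulVec w i = w i - T.mulVec w i := by
      rw [Matrix.sub_mulVec, Matrix.one_mulVec]
      simp
    linarith
  exact hw0 this

lemma mul_nonneg_entries {A B : Matrix n n ℝ} (hA : ∀ i j, 0 ≤ A i j) (hB : ∀ i j, 0 ≤ B i j) :
    ∀ i j, 0 ≤ (A * B) i j := by
  intro i j
  rw [Matrix.mul_apply]
  exact Finset.sum_nonneg fun k _ => mul_nonneg (hA i k) (hB k j)

lemma pow_nonneg_entries {A : Matrix n n ℝ} (hA : ∀ i j, 0 ≤ A i j) (m : ℕ) :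
    ∀ i j, 0 ≤ (A ^ m) i j := by
  induction m with
  | zero => intro i j; by_cases hij : i = j <;> simp [hij, Matrix.one_apply_ne, pow_zero]
  | succ k ih =>
    rw [pow_succ]
    exact mul_nonneg_entries ih hA

lemma cont_inv_entry (B : Matrix n n ℝ) (i j : n) (s₀ : ℝ)
    (h : (s₀ • (1 : Matrix n n ℝ) - B).det ≠ 0) :
    ContinuousAt (fun s : ℝ => (s • (1 : Matrix n n ℝ) - B)⁻¹ i j) s₀ := by
  have hcM : Continuous (fun s : ℝ => s • (1 : Matrix n n ℝ) - B) :=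
    (continuous_id.smul continuous_const).sub continuous_const
  have h1 : ContinuousAt (fun s : ℝ => ((s • (1 : Matrix n n ℝ) - B).det)⁻¹) s₀ :=
    (hcM.matrix_det.continuousAt).inv₀ h
  have h2 : ContinuousAt (fun s : ℝ => (s • (1 : Matrix n n ℝ) - B).adjugate i j) s₀ :=
    (hcM.matrix_adjugate.matrix_elem i j).continuousAt
  have heq : (fun s : ℝ => (s • (1 : Matrix n n ℝ) - B)⁻¹ i j)
      = fun s : ℝ => ((s • (1 : Matrix n n ℝ) - B).det)⁻¹
          * (s • (1 : Matrix n n ℝ) - B).adjugate i j := by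
    funext s
    rw [Matrix.inv_def]
    simp [Matrix.smul_apply, Ring.inverse_eq_inv]
  rw [heq]
  exact h1.mul h2

lemma det_ne_of_spec_lt {B : Matrix n n ℝ} {t : ℝ}
    (hspec : ∀ z ∈ spectrum ℂ (B.map (algebraMap ℝ ℂ)), z.re < t) {s : ℝ} (hs : t ≤ s) :
    (s • (1 : Matrix n n ℝ) - B).det ≠ 0 := by
  intro h0
  have hmap : ((s • (1 : Matrix n n ℝ) - B).map (algebraMap ℝ ℂ))
      = (s : ℂ) • (1 : Matrix n n ℂ) - B.map (algebraMap ℝ ℂ) := by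
    rw [Matrix.map_sub _ (map_sub _), map_smul_one']
  have hdetC : ((s : ℂ) • (1 : Matrix n n ℂ) - B.map (algebraMap ℝ ℂ)).det = 0 := by
    rw [← hmap]
    have := (RingHom.map_det (algebraMap ℝ ℂ) (s • (1 : Matrix n n ℝ) - B)).symm
    rw [RingHom.mapMatrix_apply] at this
    rw [this, h0, map_zero]
  have := hspec (s : ℂ) ((memspec_iff_det _ _).mpr hdetC)
  simp only [Complex.ofReal_re] at this
  linarith

section NormSec

attribute [local instance] Matrix.linftyOpNormedAddCommGroup Matrix.linftyOpNormedRing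
  Matrix.linftyOpNormedAlgebra

lemma entry_abs_le_norm (A : Matrix n n ℝ) (i j : n) : |A i j| ≤ ‖A‖ := by
  have h1 : ‖A i j‖₊ ≤ ∑ k, ‖A i k‖₊ :=
    Finset.single_le_sum (f := fun k => ‖A i k‖₊) (fun k _ => zero_le) (Finset.mem_univ j)
  have h2 : (∑ k, ‖A i k‖₊) ≤ Finset.univ.sup (fun i' => ∑ k, ‖A i' k‖₊) :=
    Finset.le_sup (f := fun i' => ∑ k, ‖A i' k‖₊) (Finset.mem_univ i)
  have := le_trans h1 h2
  rw [Matrix.linfty_opNorm_def]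
  exact_mod_cast this

lemma K1 {X : Matrix n n ℝ} (hX : ∀ i j, 0 ≤ X i j) (h : ‖X‖ < 1) :
    IsUnit (1 - X).det ∧ ∀ i j, 0 ≤ (1 - X)⁻¹ i j := by
  have hu : IsUnit (1 - X) := (Units.oneSub X h).isUnit
  have hdet : IsUnit (1 - X).det := (Matrix.isUnit_iff_isUnit_det _).mp hu
  refine ⟨hdet, ?_⟩
  set S : Matrix n n ℝ := ∑' m : ℕ, X ^ m with hS
  have hinv : (1 - X)⁻¹ = S := Matrix.inv_eq_right_inv (mul_neg_geom_series X h)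
  have hsummable : Summable (fun m : ℕ => X ^ m) := summable_geometric_of_norm_lt_one h
  have htail : ∀ m : ℕ, S = (∑ k ∈ Finset.range m, X ^ k) + X ^ m * S := by
    intro m
    have hc : ((∑ k ∈ Finset.range m, X ^ k) + X ^ m * S) * (1 - X) = S * (1 - X) := by
      have hg : (∑ k ∈ Finset.range m, X ^ k) * (1 - X) = 1 - X ^ m := by
        have h0 := geom_sum_mul X m
        have h2 : (∑ k ∈ Finset.range m, X ^ k) * (1 - X)
            = -((∑ k ∈ Finset.range m, X ^ k) * (X - 1)) := by
          rw [← mul_neg, neg_sub]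
        rw [h2, h0, neg_sub]
      have hs : S * (1 - X) = 1 := geom_series_mul_neg X h
      rw [add_mul, hg, mul_assoc, hs]
      simp
    exact (hu.mul_right_cancel hc).symm
  intro i j
  rw [hinv]
  have hbound : ∀ m : ℕ, 0 < m → -(‖X‖ ^ m * ‖S‖) ≤ S i j := by
    intro m hm
    have hsplit := htail m
    have he : S i j = (∑ k ∈ Finset.range m, X ^ k) i j + (X ^ m * S) i j := by
      rw [← Matrix.add_apply, ← hsplit]
    have h1 : 0 ≤ (∑ k ∈ Finset.range m, X ^ k) i j := by
      rw [Matrix.sum_apply]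
      exact Finset.sum_nonneg fun k _ => pow_nonneg_entries hX k i j
    have h2 : |(X ^ m * S) i j| ≤ ‖X‖ ^ m * ‖S‖ := by
      refine le_trans (entry_abs_le_norm _ i j) ?_
      refine le_trans (norm_mul_le _ _) ?_
      exact mul_le_mul_of_nonneg_right (norm_pow_le' X hm) (norm_nonneg _)
    linarith [neg_abs_le ((X ^ m * S) i j)]
  have hlim : Filter.Tendsto (fun m : ℕ => -(‖X‖ ^ m * ‖S‖)) Filter.atTop (nhds 0) := by
    have := (tendsto_pow_atTop_nhds_zero_of_lt_one (norm_nonneg X) h).mul_const ‖S‖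
    simpa using this.neg
  refine le_of_tendsto hlim ?_
  filter_upwards [Filter.eventually_gt_atTop 0] with m hm
  exact hbound m hm

lemma K2 {B : Matrix n n ℝ} (hB : ∀ i j, 0 ≤ B i j) {s : ℝ} (hs : 0 < s) (hsB : ‖B‖ < s) :
    ∀ i j, 0 ≤ (s • (1 : Matrix n n ℝ) - B)⁻¹ i j := by
  set X : Matrix n n ℝ := s⁻¹ • B with hX
  have hXnn : ∀ i j, 0 ≤ X i j := fun i j => by
    simpa [hX, Matrix.smul_apply] using mul_nonneg (inv_nonneg.mpr hs.le) (hB i j)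
  have hXnorm : ‖X‖ < 1 := by
    rw [hX, norm_smul, norm_inv, Real.norm_of_nonneg hs.le]
    rw [inv_mul_lt_iff₀ hs, mul_one]
    exact hsB
  obtain ⟨hdet, hnn⟩ := K1 hXnn hXnorm
  have hfact : s • (1 : Matrix n n ℝ) - B = s • (1 - X) := by
    rw [hX, smul_sub, smul_smul, mul_inv_cancel₀ hs.ne', one_smul]
  have hinv : (s • (1 : Matrix n n ℝ) - B)⁻¹ = s⁻¹ • (1 - X)⁻¹ := by
    apply Matrix.inv_eq_right_inv
    rw [hfact, Matrix.smul_mul, Matrix.mul_smul, smul_smul, mul_inv_cancel₀ hs.ne',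
      Matrix.mul_nonsing_inv _ hdet, one_smul]
  intro i j
  rw [hinv]
  simpa [Matrix.smul_apply] using mul_nonneg (inv_nonneg.mpr hs.le) (hnn i j)

lemma K3 {B : Matrix n n ℝ} {σ s : ℝ} (hs : s ≤ σ)
    (hσdet : (σ • (1 : Matrix n n ℝ) - B).det ≠ 0)
    (hσnn : ∀ i j, 0 ≤ (σ • (1 : Matrix n n ℝ) - B)⁻¹ i j)
    (hlt : (σ - s) * ‖(σ • (1 : Matrix n n ℝ) - B)⁻¹‖ < 1) :
    ∀ i j, 0 ≤ (s • (1 : Matrix n n ℝ) - B)⁻¹ i j := by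
  set Rσ : Matrix n n ℝ := (σ • (1 : Matrix n n ℝ) - B)⁻¹ with hRσ
  set X : Matrix n n ℝ := (σ - s) • Rσ with hX
  have hXnn : ∀ i j, 0 ≤ X i j := fun i j => by
    simpa [hX, Matrix.smul_apply] using mul_nonneg (by linarith) (hσnn i j)
  have hXnorm : ‖X‖ < 1 := by
    rw [hX, norm_smul, Real.norm_of_nonneg (by linarith : (0:ℝ) ≤ σ - s)]
    exact hlt
  obtain ⟨hdet1, hnn1⟩ := K1 hXnn hXnorm
  have hσu : IsUnit (σ • (1 : Matrix n n ℝ) - B).det := isUnit_iff_ne_zero.mpr hσdet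
  have hfact : s • (1 : Matrix n n ℝ) - B = (σ • (1 : Matrix n n ℝ) - B) * (1 - X) := by
    rw [mul_sub, mul_one, hX, Matrix.mul_smul, hRσ, Matrix.mul_nonsing_inv _ hσu, sub_smul]
    abel
  rw [hfact, Matrix.mul_inv_rev]
  exact mul_nonneg_entries hnn1 hσnn

lemma key_resolvent {B : Matrix n n ℝ} (hB : ∀ i j, 0 ≤ B i j) {t : ℝ} (ht : 0 < t)
    (hspec : ∀ z ∈ spectrum ℂ (B.map (algebraMap ℝ ℂ)), z.re < t) :
    ∀ s : ℝ, t ≤ s → ∀ i j, 0 ≤ (s • (1 : Matrix n n ℝ) - B)⁻¹ i j := by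
  by_contra hcon
  push_neg at hcon
  set E : Set ℝ := {s | t ≤ s ∧ ¬ ∀ i j, 0 ≤ (s • (1 : Matrix n n ℝ) - B)⁻¹ i j} with hE
  have hEne : E.Nonempty := by
    obtain ⟨s, hs1, i, j, hij⟩ := hcon
    exact ⟨s, hs1, by push_neg; exact ⟨i, j, hij⟩⟩
  have hgood : ∀ s : ℝ, t ≤ s → ‖B‖ < s → ∀ i j, 0 ≤ (s • (1 : Matrix n n ℝ) - B)⁻¹ i j :=
    fun s hs1 hs2 => K2 hB (lt_of_lt_of_le ht hs1) hs2
  have hEbdd : BddAbove E := by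
    refine ⟨max t ‖B‖, fun s hs => ?_⟩
    by_contra hgt
    push_neg at hgt
    exact hs.2 (hgood s hs.1 (lt_of_le_of_lt (le_max_right t ‖B‖) hgt))
  set s₀ : ℝ := sSup E with hs₀
  obtain ⟨e₀, he₀⟩ := id hEne
  have hts₀ : t ≤ s₀ := le_trans he₀.1 (le_csSup hEbdd he₀)
  have hgood_gt : ∀ s : ℝ, s₀ < s → ∀ i j, 0 ≤ (s • (1 : Matrix n n ℝ) - B)⁻¹ i j := by
    intro s hs i j
    by_contra hneg
    push_neg at hneg
    have hsE : s ∈ E := ⟨le_trans hts₀ hs.le, by push_neg; exact ⟨i, j, hneg⟩⟩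
    exact absurd (le_csSup hEbdd hsE) (not_le.mpr hs)
  have hs₀nn : ∀ i j, 0 ≤ (s₀ • (1 : Matrix n n ℝ) - B)⁻¹ i j := by
    intro i j
    have hdet : (s₀ • (1 : Matrix n n ℝ) - B).det ≠ 0 := det_ne_of_spec_lt hspec hts₀
    have hcont := (cont_inv_entry B i j s₀ hdet).continuousWithinAt (s := Set.Ioi s₀)
    refine ge_of_tendsto hcont ?_
    filter_upwards [self_mem_nhdsWithin] with s hs
    exact hgood_gt s hs i j
  set K : ℝ := ‖(s₀ • (1 : Matrix n n ℝ) - B)⁻¹‖ with hK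
  have hδpos : 0 < (K + 1)⁻¹ := by positivity
  obtain ⟨e, heE, he⟩ := exists_lt_of_lt_csSup hEne (by linarith : s₀ - (K + 1)⁻¹ < s₀)
  have hes₀ : e ≤ s₀ := le_csSup hEbdd heE
  have hte : t ≤ e := heE.1
  have hlt : (s₀ - e) * K < 1 := by
    have h1 : s₀ - e < (K + 1)⁻¹ := by linarith
    have h2 : 0 ≤ K := norm_nonneg _
    nlinarith [mul_lt_mul_of_pos_right h1 (by linarith : (0:ℝ) < K + 1),
      inv_mul_cancel₀ (by linarith : K + 1 ≠ 0)]
  have := K3 hes₀ (det_ne_of_spec_lt hspec hts₀) hs₀nn hlt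
  exact heE.2 this

end NormSec

/-- For a Metzler stable matrix, the determinant is nonzero and the inverse is
entrywise nonpositive. -/
lemma metzler_neg_inv {M : Matrix n n ℝ} (hM : ∀ i j, i ≠ j → 0 ≤ M i j)
    (hspec : ∀ z ∈ spectrum ℂ (M.map (algebraMap ℝ ℂ)), z.re < 0) :
    M.det ≠ 0 ∧ ∀ i j, M⁻¹ i j ≤ 0 := by
  set c : ℝ := 1 + ∑ i, |M i i| with hc
  have hc0 : 0 < c := by positivity
  have hcM : ∀ i, 0 ≤ M i i + c := by
    intro i
    have h1 : |M i i| ≤ ∑ k, |M k k| :=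
      Finset.single_le_sum (f := fun k => |M k k|) (fun k _ => abs_nonneg _) (Finset.mem_univ i)
    have := neg_abs_le (M i i)
    simp only [hc]
    linarith
  set B : Matrix n n ℝ := M + c • 1 with hB
  have hBnn : ∀ i j, 0 ≤ B i j := by
    intro i j
    by_cases hij : i = j
    · subst hij; simpa [hB, Matrix.one_apply] using hcM i
    · simpa [hB, Matrix.one_apply_ne hij] using hM i j hij
  have hmapB : B.map (algebraMap ℝ ℂ) = M.map (algebraMap ℝ ℂ) + (c : ℂ) • 1 := by
    rw [hB, Matrix.map_add _ (map_add _), map_smul_one']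
  have hspecB : ∀ z ∈ spectrum ℂ (B.map (algebraMap ℝ ℂ)), z.re < c := by
    intro z hz
    rw [memspec_iff_det] at hz
    have hzc : (z - c) ∈ spectrum ℂ (M.map (algebraMap ℝ ℂ)) := by
      rw [memspec_iff_det]
      have : (z - c) • (1 : Matrix n n ℂ) - M.map (algebraMap ℝ ℂ)
          = z • (1 : Matrix n n ℂ) - B.map (algebraMap ℝ ℂ) := by
        rw [hmapB, sub_smul]
        abel
      rw [this]
      exact hz
    have := hspec _ hzc
    simp only [Complex.sub_re, Complex.ofReal_re] at this
    linarith
  have hnn := key_resolvent hBnn hc0 hspecB c le_rfl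
  have hdet : (c • (1 : Matrix n n ℝ) - B).det ≠ 0 := det_ne_of_spec_lt hspecB le_rfl
  have hcB : c • (1 : Matrix n n ℝ) - B = -M := by
    rw [hB]
    abel
  rw [hcB] at hnn hdet
  have hMdet : M.det ≠ 0 := by
    intro h
    rw [Matrix.det_neg, h, mul_zero] at hdet
    exact hdet rfl
  have hMu : IsUnit M.det := isUnit_iff_ne_zero.mpr hMdet
  have hninv : (-M)⁻¹ = -(M⁻¹) := by
    apply Matrix.inv_eq_right_inv
    rw [neg_mul_neg]
    exact Matrix.mul_nonsing_inv M hMu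
  refine ⟨hMdet, fun i j => ?_⟩
  have := hnn i j
  rw [hninv] at this
  simpa using this

lemma specRad_lt_one_iff_abs (A : Matrix n n ℝ) :
    specRad A < 1 ↔ ∀ z ∈ spectrum ℂ (A.map (algebraMap ℝ ℂ)), ‖z‖ < 1 := by
  set s : Set ℝ := (fun z : ℂ => ‖z‖) '' spectrum ℂ (A.map (algebraMap ℝ ℂ)) with hs
  have hfin : s.Finite := (spec_finite _).image _
  constructor
  · intro h z hz
    have hmem : ‖z‖ ∈ s := ⟨z, hz, rfl⟩
    exact lt_of_le_of_lt (le_csSup hfin.bddAbove hmem) h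
  · intro h
    by_cases hne : s.Nonempty
    · obtain ⟨z, hz, hzs⟩ := hne.csSup_mem hfin
      rw [specRad, ← hs, ← hzs]
      exact h z hz
    · rw [Set.not_nonempty_iff_eq_empty] at hne
      rw [specRad, ← hs, hne, Real.sSup_empty]
      norm_num

end NGM

open NGM in
/-- next-generation method: for `F` entrywise nonnegative and `V` Metzler
with all eigenvalues of strictly negative real part, the spectral radius of `-F V⁻¹` is `< 1`
iff every eigenvalue of `F + V` has strictly negative real part. -/
theorem specRad_lt_one_iff_stable {n : Type*} [Fintype n] [DecidableEq n]
    (F V : Matrix n n ℝ) (hF : ∀ i j, 0 ≤ F i j) (hV : V.IsMetzler)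
    (hVspec : ∀ z ∈ spectrum ℂ (V.map (algebraMap ℝ ℂ)), z.re < 0) :
    specRad (-(F * V⁻¹)) < 1 ↔
      ∀ z ∈ spectrum ℂ ((F + V).map (algebraMap ℝ ℂ)), z.re < 0 := by
  classical
  obtain ⟨hVdet, hVinv⟩ := metzler_neg_inv hV hVspec
  have hVu : IsUnit V.det := isUnit_iff_ne_zero.mpr hVdet
  set T : Matrix n n ℝ := -(F * V⁻¹) with hTdef
  have hT : ∀ i j, 0 ≤ T i j := by
    intro i j
    have : T i j = ∑ k, F i k * (-(V⁻¹ k j)) := by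
      rw [hTdef]
      simp [Matrix.mul_apply, Finset.sum_neg_distrib, mul_neg]
    rw [this]
    exact Finset.sum_nonneg fun k _ => mul_nonneg (hF i k) (neg_nonneg.mpr (hVinv k j))
  have hnegVinv : (-V)⁻¹ = -(V⁻¹) := by
    apply Matrix.inv_eq_right_inv
    rw [neg_mul_neg]
    exact Matrix.mul_nonsing_inv V hVu
  have hfact : (1 - T) * (-V) = -(F + V) := by
    rw [sub_mul, one_mul, hTdef, neg_mul_neg, Matrix.mul_assoc, Matrix.nonsing_inv_mul V hVu,
      mul_one]
    abel
  have hdetnegV : (-V).det ≠ 0 := by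
    rw [Matrix.det_neg]
    intro h
    rcases mul_eq_zero.mp h with h1 | h1
    · exact pow_ne_zero _ (by norm_num : (-1 : ℝ) ≠ 0) h1
    · exact hVdet h1
  have hMetzFV : ∀ i j, i ≠ j → 0 ≤ (F + V) i j := fun i j hij => by
    simpa [Matrix.add_apply] using add_nonneg (hF i j) (hV i j hij)
  constructor
  · intro h
    have habs : ∀ z ∈ spectrum ℂ (T.map (algebraMap ℝ ℂ)), ‖z‖ < 1 :=
      (specRad_lt_one_iff_abs T).mp h
    have hspecT : ∀ z ∈ spectrum ℂ (T.map (algebraMap ℝ ℂ)), z.re < 1 :=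
      fun z hz => lt_of_le_of_lt (Complex.re_le_norm z) (habs z hz)
    have h1Tnn' := key_resolvent hT one_pos hspecT 1 le_rfl
    have h1Tdet' : ((1 : ℝ) • (1 : Matrix n n ℝ) - T).det ≠ 0 := det_ne_of_spec_lt hspecT le_rfl
    rw [one_smul] at h1Tnn' h1Tdet'
    have h1Tu : IsUnit (1 - T).det := isUnit_iff_ne_zero.mpr h1Tdet'
    have hdetnegFV : (-(F + V)).det ≠ 0 := by
      rw [← hfact, Matrix.det_mul]
      exact mul_ne_zero h1Tdet' hdetnegV
    have hFVdet : (F + V).det ≠ 0 := by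
      intro h0
      rw [Matrix.det_neg, h0, mul_zero] at hdetnegFV
      exact hdetnegFV rfl
    have hFVu : IsUnit (F + V).det := isUnit_iff_ne_zero.mpr hFVdet
    have hnegFVinv : ∀ i j, 0 ≤ (-(F + V))⁻¹ i j := by
      have heq : (-(F + V))⁻¹ = (-V)⁻¹ * (1 - T)⁻¹ := by
        rw [← hfact, Matrix.mul_inv_rev]
      rw [heq]
      refine mul_nonneg_entries (fun i j => ?_) h1Tnn'
      rw [hnegVinv]
      simpa using hVinv i j
    have hFVinv : ∀ i j, (F + V)⁻¹ i j ≤ 0 := by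
      have heq : (-(F + V))⁻¹ = -((F + V)⁻¹) := by
        apply Matrix.inv_eq_right_inv
        rw [neg_mul_neg]
        exact Matrix.mul_nonsing_inv _ hFVu
      intro i j
      have := hnegFVinv i j
      rw [heq] at this
      simpa using this
    exact metzler_stable_of_inv_nonpos hMetzFV hFVu hFVinv
  · intro h
    obtain ⟨hFVdet, hFVinv⟩ := metzler_neg_inv hMetzFV h
    have hFVu : IsUnit (F + V).det := isUnit_iff_ne_zero.mpr hFVdet
    have hdetnegFV : (-(F + V)).det ≠ 0 := by
      rw [Matrix.det_neg]
      intro h0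
      rcases mul_eq_zero.mp h0 with h1 | h1
      · exact pow_ne_zero _ (by norm_num : (-1 : ℝ) ≠ 0) h1
      · exact hFVdet h1
    have hnegFVu : IsUnit (-(F + V)).det := isUnit_iff_ne_zero.mpr hdetnegFV
    have hdet1T : (1 - T).det ≠ 0 := by
      intro h0
      have := congrArg Matrix.det hfact
      rw [Matrix.det_mul, h0, zero_mul] at this
      exact hdetnegFV this.symm
    have h1Tu : IsUnit (1 - T).det := isUnit_iff_ne_zero.mpr hdet1T
    have hnegFVinv : (-(F + V))⁻¹ = -((F + V)⁻¹) := by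
      apply Matrix.inv_eq_right_inv
      rw [neg_mul_neg]
      exact Matrix.mul_nonsing_inv _ hFVu
    have e1 : (1 - T)⁻¹ = (-V) * (-(F + V))⁻¹ := by
      apply Matrix.inv_eq_right_inv
      rw [← Matrix.mul_assoc, hfact]
      exact Matrix.mul_nonsing_inv _ hnegFVu
    have hTnegV : T * (-V) = F := by
      rw [hTdef, neg_mul_neg, Matrix.mul_assoc, Matrix.nonsing_inv_mul V hVu, mul_one]
    have e2 : (1 - T)⁻¹ = 1 + F * (-(F + V))⁻¹ := by
      have e3 : (1 - T)⁻¹ = (1 - T) * (1 - T)⁻¹ + T * (1 - T)⁻¹ := by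
        rw [← add_mul, sub_add_cancel, one_mul]
      rw [e3, Matrix.mul_nonsing_inv _ h1Tu]
      congr 1
      rw [e1, ← Matrix.mul_assoc, hTnegV]
    have h1Tnn : ∀ i j, 0 ≤ (1 - T)⁻¹ i j := by
      intro i j
      rw [e2]
      have h1 : (0:ℝ) ≤ (1 : Matrix n n ℝ) i j := by
        by_cases hij : i = j
        · subst hij; simp
        · simp [Matrix.one_apply_ne hij]
      have h2 : 0 ≤ (F * (-(F + V))⁻¹) i j := by
        refine mul_nonneg_entries hF (fun i' j' => ?_) i j
        rw [hnegFVinv]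
        simpa using hFVinv i' j'
      simpa [Matrix.add_apply] using add_nonneg h1 h2
    have habs := abs_lt_one_of_inv_nonneg hT h1Tu h1Tnn
    exact (specRad_lt_one_iff_abs T).mpr habs
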